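/- Let e, b be real numbers, not both zero, and let E_{ab} and B_{ab} be the Petrov type III canonical matrices E = [[0, e, −b], [e, 0, 0], [−b, 0, 0]] and B = [[0, b, e], [b, 0, 0], [e, 0, 0]]. Let W, 𝒫_a, t_{ab}, Q_{cdb}, t_{abcd} be the corresponding superenergy quantities. Then 𝒫_a ≠ 0, 𝒫_a 𝒫^a = W²/4, t_{ab} = ½ h_{ab} W − 2 𝒫_a 𝒫_b / W, Q_{abc} = h_{bc} 𝒫_a + h_{ac} 𝒫_b + h_{ab} 𝒫_c − 16 𝒫_a 𝒫_b 𝒫_c / W², and t_{abcd} = −64 𝒫_a 𝒫_b 𝒫_c 𝒫_d / W³ + (12/W) h_{(ab} 𝒫_c 𝒫_{d)}. -/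

import Mathlib

noncomputable section

/-- The Euclidean metric `δ_{ab}` on `ℝ³`. -/
def h3 : Fin 3 → Fin 3 → ℝ := fun a b => if a = b then 1 else 0

/-- The 3-dimensional Levi-Civita symbol with `ε₁₂₃ = 1`. -/
def eps3 (a b c : Fin 3) : ℝ :=
  ((((b.val : ℤ) - a.val).sign * ((c.val : ℤ) - a.val).sign *
    ((c.val : ℤ) - b.val).sign : ℤ) : ℝ)

/-- A 3×3 array. -/
abbrev Mat3 := Fin 3 → Fin 3 → ℝ

/-- Superenergy density `W = E_{ab} E^{ab} + B_{ab} B^{ab}`. -/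
def Wd (E B : Mat3) : ℝ := ∑ a, ∑ b, (E a b * E a b + B a b * B a b)

/-- Super-Poynting vector `𝒫_a = 2 B_p{}^l E_{ql} ε_a{}^{pq}`. -/
def Pd (E B : Mat3) (a : Fin 3) : ℝ := 2 * ∑ p, ∑ q, ∑ l, B p l * E q l * eps3 a p q

/-- `t_{ab} = W h_{ab} − 2 (B_a{}^c B_{bc} + E_a{}^c E_{bc})`. -/
def td (E B : Mat3) (a b : Fin 3) : ℝ :=
  Wd E B * h3 a b - 2 * ∑ c, (B a c * B b c + E a c * E b c)

/-- `Q_{cdb} = h_{cd} 𝒫_b − 2 (B_{da} E_{cf} + B_{ca} E_{df}) ε_b{}^{af}`. -/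
def Qd (E B : Mat3) (c d b : Fin 3) : ℝ :=
  h3 c d * Pd E B b - 2 * ∑ a, ∑ f, (B d a * E c f + B c a * E d f) * eps3 b a f

/-- The fully spatial part `t_{abcd}` of the Bel-Robinson tensor. -/
def t4d (E B : Mat3) (a b c d : Fin 3) : ℝ :=
  4 * (B a b * B c d + E a b * E c d)
  - h3 c d * td E B a b
  + (h3 b d * td E B c a + h3 b c * td E B d a)
  + (h3 a d * td E B c b + h3 a c * td E B d b)
  - h3 a b * td E B c d
  + Wd E B * (h3 a b * h3 c d - (h3 a c * h3 d b + h3 a d * h3 c b))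

/-- Total symmetrization of a rank-3 tensor on `ℝ³`. -/
def sym3 (T : Fin 3 → Fin 3 → Fin 3 → ℝ) (a b c : Fin 3) : ℝ :=
  (1/6) * ∑ σ : Equiv.Perm (Fin 3),
    T (![a, b, c] (σ 0)) (![a, b, c] (σ 1)) (![a, b, c] (σ 2))

/-- Total symmetrization of a rank-4 tensor on `ℝ³`. -/
def sym43 (T : Fin 3 → Fin 3 → Fin 3 → Fin 3 → ℝ) (a b c d : Fin 3) : ℝ :=
  (1/24) * ∑ σ : Equiv.Perm (Fin 4),
    T (![a, b, c, d] (σ 0)) (![a, b, c, d] (σ 1)) (![a, b, c, d] (σ 2)) (![a, b, c, d] (σ 3))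


lemma h3_comm' (a b : Fin 3) : h3 a b = h3 b a := by
  simp [h3, eq_comm]

lemma perm4univ' : (Finset.univ : Finset (Equiv.Perm (Fin 4))) = {(1 : Equiv.Perm (Fin 4)), (Equiv.swap 2 3 : Equiv.Perm (Fin 4)), (Equiv.swap 1 2 : Equiv.Perm (Fin 4)), (Equiv.swap 1 3 * Equiv.swap 1 2 : Equiv.Perm (Fin 4)), (Equiv.swap 1 2 * Equiv.swap 1 3 : Equiv.Perm (Fin 4)), (Equiv.swap 1 3 : Equiv.Perm (Fin 4)), (Equiv.swap 0 1 : Equiv.Perm (Fin 4)), (Equiv.swap 0 1 * Equiv.swap 2 3 : Equiv.Perm (Fin 4)), (Equiv.swap 0 2 * Equiv.swap 0 1 : Equiv.Perm (Fin 4)), (Equiv.swap 0 3 * Equiv.swap 0 2 * Equiv.swap 0 1 : Equiv.Perm (Fin 4)), (Equiv.swap 0 2 * Equiv.swap 0 3 * Equiv.swap 0 1 : Equiv.Perm (Fin 4)), (Equiv.swap 0 3 * Equiv.swap 0 1 : Equiv.Perm (Fin 4)), (Equiv.swap 0 1 * Equiv.swap 0 2 : Equiv.Perm (Fin 4)), (Equiv.swap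 0 1 * Equiv.swap 0 3 * Equiv.swap 0 2 : Equiv.Perm (Fin 4)), (Equiv.swap 0 2 : Equiv.Perm (Fin 4)), (Equiv.swap 0 3 * Equiv.swap 0 2 : Equiv.Perm (Fin 4)), (Equiv.swap 0 2 * Equiv.swap 1 3 : Equiv.Perm (Fin 4)), (Equiv.swap 0 3 * Equiv.swap 0 1 * Equiv.swap 0 2 : Equiv.Perm (Fin 4)), (Equiv.swap 0 1 * Equiv.swap 0 2 * Equiv.swap 0 3 : Equiv.Perm (Fin 4)), (Equiv.swap 0 1 * Equiv.swap 0 3 : Equiv.Perm (Fin 4)), (Equiv.swap 0 2 * Equiv.swap 0 3 : Equiv.Perm (Fin 4)), (Equiv.swap 0 3 : Equiv.Perm (Fin 4)), (Equiv.swap 0 2 * Equiv.swap 0 1 * Equiv.swap 0 3 : Equiv.Perm (Fin 4)), (Equiv.swap 0 3 * Equiv.swap 1 2 : Equiv.Perm (Fin 4))} := by decide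

lemma sym43_hPP' (P : Fin 3 → ℝ) (a b c d : Fin 3) :
    sym43 (fun p q r s => h3 p q * P r * P s) a b c d =
    (1/6) * (h3 a b * P c * P d + h3 a c * P b * P d + h3 a d * P b * P c
      + h3 c d * P a * P b + h3 b d * P a * P c + h3 b c * P a * P d) := by
  rw [sym43, perm4univ']
  simp (config := { decide := true }) [Finset.sum_insert, Finset.mem_insert, Equiv.swap_apply_def]
  rw [h3_comm' b a, h3_comm' d a, h3_comm' d b, h3_comm' c a, h3_comm' c b, h3_comm' d c]
  ring

set_option maxHeartbeats 1600000 in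
/-- Canonical forms of the Bel-Robinson spatial parts for Petrov type III. -/
theorem petrov_type_III_canonical_superenergy
    (e b : ℝ) (hne : ¬(e = 0 ∧ b = 0))
    (E B : Mat3)
    (hE : E = fun x y => !![0, e, -b; e, 0, 0; -b, 0, 0] x y)
    (hB : B = fun x y => !![0, b, e; b, 0, 0; e, 0, 0] x y) :
    Pd E B ≠ 0 ∧
    (∑ a, Pd E B a * Pd E B a) = (Wd E B) ^ 2 / 4 ∧
    (∀ x y, td E B x y = (1/2) * h3 x y * Wd E B - 2 * Pd E B x * Pd E B y / Wd E B) ∧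
    (∀ x y z, Qd E B x y z =
      h3 y z * Pd E B x + h3 x z * Pd E B y + h3 x y * Pd E B z
        - 16 * Pd E B x * Pd E B y * Pd E B z / (Wd E B) ^ 2) ∧
    (∀ x y z w, t4d E B x y z w =
      -64 * Pd E B x * Pd E B y * Pd E B z * Pd E B w / (Wd E B) ^ 3
        + (12 / Wd E B) * sym43 (fun p q r s => h3 p q * Pd E B r * Pd E B s) x y z w) := by
  subst hE hB
  have hk : e ^ 2 + b ^ 2 ≠ 0 := by
    intro h; apply hne
    constructor <;> nlinarith [sq_nonneg e, sq_nonneg b]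
  have hW : Wd (fun x y => !![0, e, -b; e, 0, 0; -b, 0, 0] x y)
      (fun x y => !![0, b, e; b, 0, 0; e, 0, 0] x y) = 4 * (e ^ 2 + b ^ 2) := by
    simp [Wd, h3, eps3, Fin.ext_iff, Fin.sum_univ_three, Matrix.vecHead, Matrix.vecTail, Matrix.cons_val_zero, Matrix.cons_val_one, Matrix.cons_val_two, Matrix.head_cons, show ((-1 : ℤ).sign) = -1 from rfl, show ((1 : ℤ).sign) = 1 from rfl, show ((2 : ℤ).sign) = 1 from rfl, show ((-2 : ℤ).sign) = -1 from rfl]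
    ring
  have hP : ∀ a, Pd (fun x y => !![0, e, -b; e, 0, 0; -b, 0, 0] x y)
      (fun x y => !![0, b, e; b, 0, 0; e, 0, 0] x y) a = ![-2 * (e ^ 2 + b ^ 2), 0, 0] a := by
    intro a
    fin_cases a <;> (norm_num [Pd, h3, eps3, Fin.ext_iff, Fin.sum_univ_three, Matrix.vecHead, Matrix.vecTail, Matrix.cons_val_zero, Matrix.cons_val_one, Matrix.cons_val_two, Matrix.head_cons, show ((-1 : ℤ).sign) = -1 from rfl, show ((1 : ℤ).sign) = 1 from rfl, show ((2 : ℤ).sign) = 1 from rfl, show ((-2 : ℤ).sign) = -1 from rfl]) <;> (try ring)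
  have ht : ∀ x y, td (fun x y => !![0, e, -b; e, 0, 0; -b, 0, 0] x y)
      (fun x y => !![0, b, e; b, 0, 0; e, 0, 0] x y) x y =
      (1/2) * h3 x y * (4 * (e ^ 2 + b ^ 2))
        - 2 * (![-2 * (e ^ 2 + b ^ 2), 0, 0] x) * (![-2 * (e ^ 2 + b ^ 2), 0, 0] y)
          / (4 * (e ^ 2 + b ^ 2)) := by
    intro x y
    simp only [td, hW]
    fin_cases x <;> fin_cases y <;> (norm_num [h3, eps3, Fin.ext_iff, Fin.sum_univ_three, Matrix.vecHead, Matrix.vecTail, Matrix.cons_val_zero, Matrix.cons_val_one, Matrix.cons_val_two, Matrix.head_cons, show ((-1 : ℤ).sign) = -1 from rfl, show ((1 : ℤ).sign) = 1 from rfl, show ((2 : ℤ).sign) = 1 from rfl, show ((-2 : ℤ).sign) = -1 from rfl]) <;> (try field_simp) <;> (try ring)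
  refine ⟨?_, ?_, ?_, ?_, ?_⟩
  · intro h
    have h0 := congrFun h 0
    rw [hP 0] at h0
    simp at h0
    exact hk (by nlinarith)
  · rw [Fin.sum_univ_three, hP 0, hP 1, hP 2, hW]
    norm_num [Matrix.cons_val_two, Matrix.vecHead, Matrix.vecTail]
    ring
  · intro x y
    rw [ht x y, hW, hP x, hP y]
  · intro x y z
    simp only [Qd, hW, hP]
    fin_cases x <;> fin_cases y <;> fin_cases z <;> (norm_num [h3, eps3, Fin.ext_iff, Fin.sum_univ_three, Matrix.vecHead, Matrix.vecTail, Matrix.cons_val_zero, Matrix.cons_val_one, Matrix.cons_val_two, Matrix.head_cons, show ((-1 : ℤ).sign) = -1 from rfl, show ((1 : ℤ).sign) = 1 from rfl, show ((2 : ℤ).sign) = 1 from rfl, show ((-2 : ℤ).sign) = -1 from rfl]) <;> (try field_simp) <;>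
      (try ring)
  · intro x y z w
    rw [sym43_hPP']
    simp only [t4d, ht, hW, hP]
    fin_cases x <;> fin_cases y <;> fin_cases z <;> fin_cases w <;> (norm_num [h3, eps3, Fin.ext_iff, Fin.sum_univ_three, Matrix.vecHead, Matrix.vecTail, Matrix.cons_val_zero, Matrix.cons_val_one, Matrix.cons_val_two, Matrix.head_cons, show ((-1 : ℤ).sign) = -1 from rfl, show ((1 : ℤ).sign) = 1 from rfl, show ((2 : ℤ).sign) = 1 from rfl, show ((-2 : ℤ).sign) = -1 from rfl]) <;>
      (try field_simp) <;> (try ring)
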